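/- For any n×n correlation matrix C with eigenvalues λ₁,...,λₙ, one has Σ_j (λ_j/n)² = g_n(c²+σ²), where c and σ are the mean and standard deviation of the off-diagonal entries and g_n(x) = ((n-1)x+1)/n. -/

import Mathlib

open Matrix in


/-- Characteristic identity: `Σ_j (λ_j/n)² = g_n(c²+σ²)` for a correlation matrix. -/
theorem stmt_2 (n : ℕ) (hn : 2 ≤ n) (C : Matrix (Fin n) (Fin n) ℝ)
    (hpsd : C.PosSemidef) (hdiag : ∀ i, C i i = 1)
    (lam : Fin n → ℝ) (v : Fin n → (Fin n → ℝ))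
    (heig : ∀ j, C.mulVec (v j) = lam j • v j)
    (horth : ∀ j k, ∑ i, v j i * v k i = if j = k then (1 : ℝ) else 0) :
    ∑ j : Fin n, (lam j / (n : ℝ)) ^ 2 =
      (((n : ℝ) - 1) *
          ((2 / ((n : ℝ) * ((n : ℝ) - 1))) *
            ∑ i : Fin n, ∑ j ∈ Finset.univ.filter (fun j => j < i), C i j ^ 2) + 1) / (n : ℝ) := by
  have hsym : ∀ i j, C i j = C j i := by
    intro i j
    have h := hpsd.isHermitian
    have := congrFun (congrFun h j) i
    simpa [Matrix.conjTranspose_apply] using this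
  set V : Matrix (Fin n) (Fin n) ℝ := Matrix.of v with hV
  have hVVT : V * Vᵀ = 1 := by
    ext j k
    simp [Matrix.mul_apply, Matrix.one_apply, hV, horth j k]
  have hVTV : Vᵀ * V = 1 := mul_eq_one_comm.mp hVVT
  have hCVT : C * Vᵀ = Matrix.of fun i j => lam j * v j i := by
    ext i j
    have := congrFun (heig j) i
    simpa [Matrix.mul_apply, Matrix.mulVec, dotProduct, mul_comm, hV] using this
  have hCCVT : C * (C * Vᵀ) = Matrix.of fun i j => lam j ^ 2 * v j i := by
    rw [hCVT]
    ext i j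
    have h1 := congrFun (heig j) i
    simp only [Matrix.mulVec, dotProduct, Pi.smul_apply, smul_eq_mul] at h1
    simp only [Matrix.mul_apply, Matrix.of_apply]
    calc ∑ k, C i k * (lam j * v j k) = lam j * ∑ k, C i k * v j k := by
          rw [Finset.mul_sum]; apply Finset.sum_congr rfl; intros; ring
      _ = lam j ^ 2 * v j i := by rw [h1]; ring
  -- trace identity
  have htr : Matrix.trace (C * C) = ∑ j, lam j ^ 2 := by
    calc Matrix.trace (C * C)
        = Matrix.trace ((Vᵀ * V) * (C * C)) := by rw [hVTV, Matrix.one_mul]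
      _ = Matrix.trace (V * (C * C) * Vᵀ) := by
          rw [Matrix.mul_assoc, Matrix.trace_mul_comm, Matrix.mul_assoc]
      _ = Matrix.trace (V * (C * (C * Vᵀ))) := by rw [Matrix.mul_assoc, Matrix.mul_assoc]
      _ = ∑ j, lam j ^ 2 := by
          rw [hCCVT]
          simp only [Matrix.trace, Matrix.diag, Matrix.mul_apply, Matrix.of_apply]
          apply Finset.sum_congr rfl
          intro j _
          calc ∑ k, V j k * (lam j ^ 2 * v j k) = lam j ^ 2 * ∑ k, v j k * v j k := by
                rw [Finset.mul_sum]; apply Finset.sum_congr rfl; intros; simp [hV]; ring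
            _ = lam j ^ 2 := by rw [horth j j]; simp
  have htr2 : Matrix.trace (C * C) = ∑ i, ∑ j, C i j ^ 2 := by
    simp only [Matrix.trace, Matrix.diag, Matrix.mul_apply]
    apply Finset.sum_congr rfl
    intro i _
    apply Finset.sum_congr rfl
    intro j _
    rw [← hsym i j]; ring
  -- split the double sum
  set S := ∑ i : Fin n, ∑ j ∈ Finset.univ.filter (fun j => j < i), C i j ^ 2 with hS
  have hsplit : ∑ i, ∑ j, C i j ^ 2 = 2 * S + n := by
    have hpt : ∀ i j : Fin n, C i j ^ 2 =
        (if j < i then C i j ^ 2 else 0) + (if i < j then C i j ^ 2 else 0)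
          + (if i = j then (1:ℝ) else 0) := by
      intro i j
      rcases lt_trichotomy i j with h | h | h
      · simp [h, not_lt.mpr h.le, h.ne, h.ne']
      · subst h; simp [hdiag i, lt_irrefl]
      · simp [h, not_lt.mpr h.le, h.ne, h.ne']
    calc ∑ i, ∑ j, C i j ^ 2
        = (∑ i, ∑ j, if j < i then C i j ^ 2 else 0)
          + (∑ i, ∑ j, if i < j then C i j ^ 2 else 0)
          + (∑ i, ∑ j, if i = j then (1:ℝ) else 0) := by
          rw [← Finset.sum_add_distrib, ← Finset.sum_add_distrib]
          apply Finset.sum_congr rfl; intro i _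
          rw [← Finset.sum_add_distrib, ← Finset.sum_add_distrib]
          exact Finset.sum_congr rfl fun j _ => hpt i j
      _ = S + S + n := by
          congr 1
          · congr 1
            · exact (Finset.sum_congr rfl fun i _ => (Finset.sum_filter _ _).symm)
            · rw [Finset.sum_comm]
              rw [hS]
              apply Finset.sum_congr rfl; intro i _
              rw [Finset.sum_filter]
              exact Finset.sum_congr rfl fun j _ => by rw [hsym]
          · simp
      _ = 2 * S + n := by ring
  have hlam2 : ∑ j, lam j ^ 2 = 2 * S + n := by rw [← htr, htr2, hsplit]
  have hn0 : (n : ℝ) ≠ 0 := by positivity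
  have hn1 : (n : ℝ) - 1 ≠ 0 := by
    have : (2:ℝ) ≤ (n:ℝ) := by exact_mod_cast hn
    intro h; nlinarith
  have hLHS : ∑ j : Fin n, (lam j / (n : ℝ)) ^ 2 = (2 * S + n) / (n:ℝ)^2 := by
    rw [← hlam2, Finset.sum_div]
    exact Finset.sum_congr rfl fun j _ => by rw [div_pow]
  rw [hLHS]
  field_simp
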